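/- If λ has trivial p-core, then for every residue i mod p, the number of boxes of λ with content congruent to i mod p equals |λ|/p. -/

import Mathlib

open Set

namespace MM

/-- `f : ℕ → ℕ` encodes a partition (0-indexed rows) if it is antitone and eventually zero. -/
def IsPartition (f : ℕ → ℕ) : Prop :=
  Antitone f ∧ ∃ N, ∀ i, N ≤ i → f i = 0

/-- boxes of the Young diagram (0-indexed) -/
def cells (f : ℕ → ℕ) : Set (ℕ × ℕ) := {c | c.2 < f c.1}

noncomputable def size (f : ℕ → ℕ) : ℕ := (cells f).ncard

noncomputable def transpose (f : ℕ → ℕ) : ℕ → ℕ := fun j => {i | j < f i}.ncard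

/-- hook length of a box -/
noncomputable def hook (f : ℕ → ℕ) (c : ℕ × ℕ) : ℤ :=
  (f c.1 : ℤ) + transpose f c.2 - c.1 - c.2 - 1

/-- content of a box -/
def content (c : ℕ × ℕ) : ℤ := (c.2 : ℤ) - c.1

/-- Maya (beta) set of a partition: beads at positions `f i - i - 1`. -/
def maya (f : ℕ → ℕ) : Set ℤ := {z | ∃ i : ℕ, z = (f i : ℤ) - i - 1}

/-- the `i`-th largest element ("bead" of rank `i`) of a set of integers -/
noncomputable def bead (S : Set ℤ) (i : ℕ) : ℤ :=
  sSup {z | z ∈ S ∧ {w | w ∈ S ∧ z < w}.ncard = i}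

/-- the partition encoded by a Maya set: row `i` counts holes below bead `i`. -/
noncomputable def partOf (S : Set ℤ) : ℕ → ℕ :=
  fun i => {t | t ∉ S ∧ t < bead S i}.ncard

/-- column-`μ` bead set: bead `z` lies in column `(-z-1) mod p`. -/
def col (S : Set ℤ) (p μ : ℕ) : Set ℤ := {k | (p : ℤ) * k - μ - 1 ∈ S}

noncomputable def charge (S : Set ℤ) : ℤ :=
  ({z | z ∈ S ∧ 0 ≤ z}.ncard : ℤ) - ({z | z ∉ S ∧ z < 0}.ncard : ℤ)

/-- the `μ`-th component of the `p`-quotient of the partition `f` -/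
noncomputable def pquot (f : ℕ → ℕ) (p μ : ℕ) : ℕ → ℕ :=
  partOf (col (maya f) p μ)

/-- the Maya set of the `p`-core: slide all beads down in each column. -/
noncomputable def coreMaya (f : ℕ → ℕ) (p : ℕ) : Set ℤ :=
  {z | ∃ μ : ℕ, μ < p ∧ ∃ k : ℤ, k < charge (col (maya f) p μ) ∧ z = (p:ℤ) * k - μ - 1}

/-- the `p`-core of `f` -/
noncomputable def pcore (f : ℕ → ℕ) (p : ℕ) : ℕ → ℕ := partOf (coreMaya f p)

/-- the rearrangement map `σ̂`: overall bead rank ↦ `p * (rank within its column) + column`. -/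
noncomputable def sigmaHat (f : ℕ → ℕ) (p : ℕ) : ℕ → ℕ :=
  fun I =>
    p * ({w | w ∈ maya f ∧ bead (maya f) I < w ∧ (p:ℤ) ∣ (w - bead (maya f) I)}.ncard)
      + ((-(bead (maya f) I) - 1) % (p:ℤ)).toNat

/-- the `p`-signature of `f`: the sign of `σ̂` if finitary, else `0`,
computed as the parity of the (finite) number of inversions. -/
noncomputable def psign (f : ℕ → ℕ) (p : ℕ) : ℤ :=
  letI := Classical.propDecidable
  if {q : ℕ × ℕ | q.1 < q.2 ∧ sigmaHat f p q.2 < sigmaHat f p q.1}.Finite then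
    (-1) ^ ({q : ℕ × ℕ | q.1 < q.2 ∧ sigmaHat f p q.2 < sigmaHat f p q.1}.ncard)
  else 0

end MM

namespace MMX
open Finset

noncomputable section
open scoped Classical

def b (f : ℕ → ℕ) (i : ℕ) : ℤ := (f i : ℤ) - i - 1

lemma b_strictAnti {f : ℕ → ℕ} (hf : Antitone f) : StrictAnti (b f) := by
  apply strictAnti_nat_of_succ_lt
  intro n
  have h := hf (Nat.le_succ n)
  simp only [Nat.succ_eq_add_one] at h
  simp only [b, Nat.succ_eq_add_one]
  push_cast
  omega

lemma b_inj {f : ℕ → ℕ} (hf : Antitone f) : Function.Injective (b f) :=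
  (b_strictAnti hf).injective

lemma b_eq {f : ℕ → ℕ} {N : ℕ} (hN : ∀ i, N ≤ i → f i = 0) {i : ℕ} (hi : N ≤ i) :
    b f i = -(i:ℤ) - 1 := by
  unfold b; rw [hN i hi]; push_cast; ring

lemma neg_le_b (f : ℕ → ℕ) (i : ℕ) : -(i:ℤ) - 1 ≤ b f i := by
  unfold b; have : (0:ℤ) ≤ f i := Int.natCast_nonneg _; omega

lemma mem_maya {f : ℕ → ℕ} {z : ℤ} : z ∈ MM.maya f ↔ ∃ i, b f i = z := by
  constructor
  · rintro ⟨i, hi⟩; exact ⟨i, hi.symm⟩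
  · rintro ⟨i, hi⟩; exact ⟨i, hi.symm⟩

lemma mem_maya_of_le {f : ℕ → ℕ} {N : ℕ} (hN : ∀ i, N ≤ i → f i = 0) {z : ℤ}
    (hz : z ≤ -(N:ℤ) - 1) : z ∈ MM.maya f := by
  refine mem_maya.2 ⟨(-z-1).toNat, ?_⟩
  have h1 : ((-z-1).toNat : ℤ) = -z-1 := Int.toNat_of_nonneg (by omega)
  have h2 : N ≤ (-z-1).toNat := by omega
  rw [b_eq hN h2, h1]; ring

lemma exists_of_mem_maya {f : ℕ → ℕ} {N : ℕ} (hN : ∀ i, N ≤ i → f i = 0) {z : ℤ}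
    (hz : z ∈ MM.maya f) (hz2 : -(N:ℤ) ≤ z) : ∃ i, i < N ∧ b f i = z := by
  obtain ⟨i, hi⟩ := mem_maya.1 hz
  refine ⟨i, ?_, hi⟩
  by_contra h
  have : b f i = -(i:ℤ) - 1 := b_eq hN (by omega)
  omega

/-- number of j < n with j ≡ q mod p -/
def g (p n : ℕ) (q : ℤ) : ℕ :=
  ((range n).filter (fun j : ℕ => ((j:ℤ) - q) % (p:ℤ) = 0)).card

lemma g_succ (p n : ℕ) (q : ℤ) :
    g p (n+1) q = g p n q + if ((n:ℤ) - q) % (p:ℤ) = 0 then 1 else 0 := by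
  unfold g
  rw [Finset.range_add_one, Finset.filter_insert]
  split_ifs with h
  · rw [Finset.card_insert_of_notMem (by simp)]
  · rfl

lemma L1 (p n : ℕ) (q : ℤ) :
    (g p n q : ℤ) - g p n (q+1) =
      (if ((n:ℤ) - (q+1)) % (p:ℤ) = 0 then 1 else 0)
        - (if ((0:ℤ) - (q+1)) % (p:ℤ) = 0 then 1 else 0) := by
  induction n with
  | zero => simp [g]
  | succ n ih =>
    rw [g_succ, g_succ]
    push_cast
    have e1 : ((n:ℤ) + 1 - (q+1)) = (n:ℤ) - q := by ring
    rw [e1]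
    split_ifs with h1 h2 h3 h2 h3 h3 <;> push_cast at ih ⊢ <;> omega

def F (f : ℕ → ℕ) (N : ℕ) : Finset (ℕ × ℕ) :=
  (range N ×ˢ range (f 0)).filter (fun c => c.2 < f c.1)

lemma cells_eq {f : ℕ → ℕ} (hf : Antitone f) {N : ℕ} (hN : ∀ i, N ≤ i → f i = 0) :
    MM.cells f = ↑(F f N) := by
  ext c
  simp only [MM.cells, Set.mem_setOf_eq, F, Finset.coe_filter, Finset.mem_product,
    Finset.mem_range, Set.mem_setOf_eq]
  constructor
  · intro h
    refine ⟨⟨?_, ?_⟩, h⟩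
    · by_contra hc
      have := hN c.1 (by omega)
      omega
    · have := hf (Nat.zero_le c.1)
      omega
  · exact fun h => h.2

def NN (p : ℕ) (f : ℕ → ℕ) (N : ℕ) (r : ℤ) : ℕ :=
  ((F f N).filter (fun c => (MM.content c - r) % (p:ℤ) = 0)).card

def A (p : ℕ) (f : ℕ → ℕ) (N : ℕ) (r : ℤ) : ℕ :=
  ((range N).filter (fun i : ℕ => (b f i - r) % (p:ℤ) = 0)).card

def B (p : ℕ) (N : ℕ) (r : ℤ) : ℕ :=
  ((range N).filter (fun i : ℕ => ((-(i:ℤ)-1) - r) % (p:ℤ) = 0)).card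

lemma NN_eq_sum (p : ℕ) {f : ℕ → ℕ} (hf : Antitone f) (N : ℕ) (r : ℤ) :
    NN p f N r = ∑ i ∈ range N, g p (f i) (r + (i:ℤ)) := by
  unfold NN F
  rw [Finset.filter_filter, Finset.card_filter, Finset.sum_product]
  refine Finset.sum_congr rfl ?_
  intro i _
  rw [g, Finset.card_filter]
  rw [← Finset.sum_subset (Finset.range_subset_range.2 (hf (Nat.zero_le i)))]
  · refine Finset.sum_congr rfl ?_
    intro j hj
    rw [Finset.mem_range] at hj
    have e : (MM.content (i, j) - r) = (j:ℤ) - (r + i) := by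
      simp only [MM.content]; ring
    simp only [hj, true_and, e]
  · intro j _ hj
    rw [Finset.mem_range] at hj
    rw [if_neg]
    intro hc
    exact hj hc.1

lemma NN_sub (p : ℕ) {f : ℕ → ℕ} (hf : Antitone f) (N : ℕ) (r : ℤ) :
    (NN p f N r : ℤ) - NN p f N (r+1) = (A p f N r : ℤ) - B p N r := by
  rw [NN_eq_sum p hf N r, NN_eq_sum p hf N (r+1)]
  have key : ∀ i ∈ range N,
      (g p (f i) (r + (i:ℤ)) : ℤ) - g p (f i) ((r+1) + (i:ℤ)) =
        (if (b f i - r) % (p:ℤ) = 0 then (1:ℤ) else 0)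
          - (if ((-(i:ℤ)-1) - r) % (p:ℤ) = 0 then (1:ℤ) else 0) := by
    intro i _
    rw [show (r+1) + (i:ℤ) = (r + i) + 1 by ring]
    rw [L1 p (f i) (r + (i:ℤ))]
    have e1 : ((f i : ℤ) - ((r + i) + 1)) = b f i - r := by unfold b; ring
    have e2 : ((0:ℤ) - ((r + i) + 1)) = (-(i:ℤ)-1) - r := by ring
    rw [e1, e2]
  push_cast
  rw [← Finset.sum_sub_distrib, Finset.sum_congr rfl key, Finset.sum_sub_distrib]
  unfold A B
  rw [Finset.card_filter, Finset.card_filter]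
  push_cast
  rfl

lemma mod_sub_iff {p : ℕ} {r r' x : ℤ} (h : (r - r') % (p:ℤ) = 0) :
    (x - r) % (p:ℤ) = 0 ↔ (x - r') % (p:ℤ) = 0 := by
  have d2 := Int.dvd_of_emod_eq_zero h
  constructor <;> intro h' <;> apply Int.emod_eq_zero_of_dvd
  · have := dvd_add (Int.dvd_of_emod_eq_zero h') d2
    rwa [show (x-r)+(r-r') = x-r' by ring] at this
  · have := dvd_sub (Int.dvd_of_emod_eq_zero h') d2
    rwa [show (x-r')-(r-r') = x-r by ring] at this

lemma NN_congr (p : ℕ) (f : ℕ → ℕ) (N : ℕ) {r r' : ℤ} (h : (r - r') % (p:ℤ) = 0) :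
    NN p f N r = NN p f N r' := by
  unfold NN
  congr 1
  exact Finset.filter_congr (fun x _ => by simpa using mod_sub_iff h)

lemma A_congr (p : ℕ) (f : ℕ → ℕ) (N : ℕ) {r r' : ℤ} (h : (r - r') % (p:ℤ) = 0) :
    A p f N r = A p f N r' := by
  unfold A
  congr 1
  exact Finset.filter_congr (fun x _ => by simpa using mod_sub_iff h)

lemma B_congr (p : ℕ) (N : ℕ) {r r' : ℤ} (h : (r - r') % (p:ℤ) = 0) :
    B p N r = B p N r' := by
  unfold B
  congr 1
  exact Finset.filter_congr (fun x _ => by simpa using mod_sub_iff h)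


section Charge

variable {p N μ : ℕ} {f : ℕ → ℕ}

lemma neg_mod_zero {x : ℤ} : x % (p:ℤ) = 0 ↔ (-x) % (p:ℤ) = 0 := by
  constructor <;> intro h <;> apply Int.emod_eq_zero_of_dvd
  · exact (Int.dvd_of_emod_eq_zero h).neg_right
  · have := (Int.dvd_of_emod_eq_zero h).neg_right
    rwa [neg_neg] at this

def s1 (p : ℕ) (f : ℕ → ℕ) (N μ : ℕ) : Finset ℕ :=
  (range N).filter (fun i : ℕ => (b f i + μ + 1) % (p:ℤ) = 0 ∧ -(μ:ℤ)-1 ≤ b f i)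

def s2 (p : ℕ) (f : ℕ → ℕ) (N μ : ℕ) : Finset ℕ :=
  (range N).filter (fun i : ℕ => ((i:ℤ) - μ) % (p:ℤ) = 0 ∧ μ < i ∧ -(i:ℤ)-1 ∉ MM.maya f)

lemma ncard_pos_beads (hf : Antitone f) (hN : ∀ i, N ≤ i → f i = 0)
    (hp : 0 < p) (hμ : μ < p) (hpN : p ≤ N) :
    {z : ℤ | z ∈ MM.col (MM.maya f) p μ ∧ 0 ≤ z}.ncard = (s1 p f N μ).card := by
  have hp' : (p:ℤ) ≠ 0 := by exact_mod_cast hp.ne'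
  have hset : {z : ℤ | z ∈ MM.col (MM.maya f) p μ ∧ 0 ≤ z}
      = (fun i : ℕ => (b f i + (μ:ℤ) + 1) / (p:ℤ)) '' ↑(s1 p f N μ) := by
    ext k
    simp only [Set.mem_setOf_eq, MM.col, Set.mem_image, Finset.mem_coe, s1,
      Finset.mem_filter, Finset.mem_range]
    constructor
    · rintro ⟨hk1, hk0⟩
      have hpk : (0:ℤ) ≤ (p:ℤ) * k := mul_nonneg (by positivity) hk0
      have hz2 : -(N:ℤ) ≤ (p:ℤ)*k - μ - 1 := by
        have h1 : (μ:ℤ) + 1 ≤ p := by exact_mod_cast hμ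
        have h2 : (p:ℤ) ≤ N := by exact_mod_cast hpN
        linarith
      obtain ⟨i, hiN, hib⟩ := exists_of_mem_maya hN hk1 hz2
      have e : b f i + (μ:ℤ) + 1 = (p:ℤ) * k := by rw [hib]; ring
      refine ⟨i, ⟨hiN, ?_, ?_⟩, ?_⟩
      · rw [e]; exact Int.mul_emod_right _ _
      · rw [hib]; linarith
      · rw [e]; exact Int.mul_ediv_cancel_left k hp'
    · rintro ⟨i, ⟨hiN, hmod, hge⟩, rfl⟩
      have d := Int.dvd_of_emod_eq_zero hmod
      have e : (p:ℤ) * ((b f i + μ + 1) / p) = b f i + μ + 1 := Int.mul_ediv_cancel' d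
      constructor
      · have e2 : (p:ℤ) * ((b f i + μ + 1) / p) - μ - 1 = b f i := by rw [e]; ring
        rw [e2]
        exact mem_maya.2 ⟨i, rfl⟩
      · exact Int.ediv_nonneg (by linarith) (by positivity)
  rw [hset, Set.ncard_image_of_injOn, Set.ncard_coe_finset]
  intro i hi j hj hij
  simp only [Finset.mem_coe, s1, Finset.mem_filter] at hi hj
  have ei : (p:ℤ) * ((b f i + μ + 1) / p) = b f i + μ + 1 :=
    Int.mul_ediv_cancel' (Int.dvd_of_emod_eq_zero hi.2.1)
  have ej : (p:ℤ) * ((b f j + μ + 1) / p) = b f j + μ + 1 :=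
    Int.mul_ediv_cancel' (Int.dvd_of_emod_eq_zero hj.2.1)
  apply b_inj hf
  have : (p:ℤ) * ((b f i + μ + 1) / p) = (p:ℤ) * ((b f j + μ + 1) / p) := by
    simp only at hij; rw [hij]
  rw [ei, ej] at this
  linarith

lemma ncard_neg_holes (hf : Antitone f) (hN : ∀ i, N ≤ i → f i = 0)
    (hp : 0 < p) (hμ : μ < p) (hpN : p ≤ N) :
    {z : ℤ | z ∉ MM.col (MM.maya f) p μ ∧ z < 0}.ncard = (s2 p f N μ).card := by
  have hp' : (p:ℤ) ≠ 0 := by exact_mod_cast hp.ne'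
  have hμp : (μ:ℤ) + 1 ≤ p := by exact_mod_cast hμ
  have hpN' : (p:ℤ) ≤ N := by exact_mod_cast hpN
  have hset : {z : ℤ | z ∉ MM.col (MM.maya f) p μ ∧ z < 0}
      = (fun i : ℕ => ((μ:ℤ) - i) / (p:ℤ)) '' ↑(s2 p f N μ) := by
    ext k
    simp only [Set.mem_setOf_eq, MM.col, Set.mem_image, Finset.mem_coe, s2,
      Finset.mem_filter, Finset.mem_range]
    constructor
    · rintro ⟨hk1, hk0⟩
      have hpk : (p:ℤ) * k ≤ -p := by
        have : (p:ℤ) * k ≤ p * (-1) := by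
          apply mul_le_mul_of_nonneg_left (by omega) (by positivity)
        linarith
      have hzN : -(N:ℤ) ≤ (p:ℤ)*k - μ - 1 := by
        by_contra hc
        exact hk1 (mem_maya_of_le hN (by omega))
      set z : ℤ := (p:ℤ)*k - μ - 1 with hz
      have hz1 : 0 ≤ -z - 1 := by omega
      refine ⟨(-z-1).toNat, ⟨?_, ?_, ?_, ?_⟩, ?_⟩
      · omega
      · have e : ((((-z-1).toNat : ℕ)) : ℤ) - μ = (p:ℤ) * (-k) := by
          rw [Int.toNat_of_nonneg hz1]; rw [hz]; ring
        rw [e]; exact Int.mul_emod_right _ _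
      · omega
      · have e : -((((-z-1).toNat : ℕ)) : ℤ) - 1 = z := by
          rw [Int.toNat_of_nonneg hz1]; ring
        rw [e]; exact hk1
      · have e : (μ:ℤ) - (((-z-1).toNat : ℕ) : ℤ) = (p:ℤ) * k := by
          rw [Int.toNat_of_nonneg hz1]; rw [hz]; ring
        rw [e]; exact Int.mul_ediv_cancel_left k hp'
    · rintro ⟨i, ⟨hiN, hmod, hμi, hnm⟩, rfl⟩
      have d : (p:ℤ) ∣ (μ:ℤ) - i := by
        have := (Int.dvd_of_emod_eq_zero hmod).neg_right
        rwa [neg_sub] at this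
      have e : (p:ℤ) * (((μ:ℤ) - i) / p) = (μ:ℤ) - i := Int.mul_ediv_cancel' d
      constructor
      · have e2 : (p:ℤ) * (((μ:ℤ) - i) / p) - μ - 1 = -(i:ℤ) - 1 := by rw [e]; ring
        rw [e2]; exact hnm
      · apply Int.ediv_neg_of_neg_of_pos _ (by positivity)
        have : (μ:ℤ) < i := by exact_mod_cast hμi
        linarith
  rw [hset, Set.ncard_image_of_injOn, Set.ncard_coe_finset]
  intro i hi j hj hij
  simp only [Finset.mem_coe, s2, Finset.mem_filter] at hi hj
  have di : (p:ℤ) ∣ (μ:ℤ) - i := by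
    have := (Int.dvd_of_emod_eq_zero hi.2.1).neg_right; rwa [neg_sub] at this
  have dj : (p:ℤ) ∣ (μ:ℤ) - j := by
    have := (Int.dvd_of_emod_eq_zero hj.2.1).neg_right; rwa [neg_sub] at this
  have ei := Int.mul_ediv_cancel' di
  have ej := Int.mul_ediv_cancel' dj
  have : (p:ℤ) * (((μ:ℤ) - i) / p) = (p:ℤ) * (((μ:ℤ) - j) / p) := by
    simp only at hij; rw [hij]
  rw [ei, ej] at this
  have : (i:ℤ) = j := by linarith
  exact_mod_cast this

end Charge


section Splits

variable {p N μ : ℕ} {f : ℕ → ℕ}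

def sWb (p : ℕ) (f : ℕ → ℕ) (N μ : ℕ) : Finset ℕ :=
  (range N).filter (fun i : ℕ => (b f i + μ + 1) % (p:ℤ) = 0 ∧ ¬(-(μ:ℤ)-1 ≤ b f i))

def sWb' (p : ℕ) (f : ℕ → ℕ) (N μ : ℕ) : Finset ℕ :=
  (range N).filter (fun i : ℕ => ((i:ℤ) - μ) % (p:ℤ) = 0 ∧ μ < i ∧ -(i:ℤ)-1 ∈ MM.maya f)

lemma A_split : A p f N (-(μ:ℤ)-1) = (s1 p f N μ).card + (sWb p f N μ).card := by
  have hA : A p f N (-(μ:ℤ)-1)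
      = ((range N).filter (fun i : ℕ => (b f i + μ + 1) % (p:ℤ) = 0)).card := by
    unfold A
    congr 1
    apply Finset.filter_congr
    intro x _
    rw [show b f x - (-(μ:ℤ)-1) = b f x + μ + 1 by ring]
  rw [hA]
  have h := Finset.card_filter_add_card_filter_not
    (s := (range N).filter (fun i : ℕ => (b f i + μ + 1) % (p:ℤ) = 0))
    (p := fun i : ℕ => -(μ:ℤ)-1 ≤ b f i)
  rw [Finset.filter_filter, Finset.filter_filter] at h
  unfold s1 sWb
  omega

lemma B_split (hp : 0 < p) (hμ : μ < p) (hpN : p ≤ N) :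
    B p N (-(μ:ℤ)-1) = 1 + (sWb' p f N μ).card + (s2 p f N μ).card := by
  have hB : B p N (-(μ:ℤ)-1)
      = ((range N).filter (fun i : ℕ => ((i:ℤ) - μ) % (p:ℤ) = 0)).card := by
    unfold B
    congr 1
    apply Finset.filter_congr
    intro x _
    rw [show (-(x:ℤ)-1) - (-(μ:ℤ)-1) = -((x:ℤ) - μ) by ring]
    exact (@neg_mod_zero p ((x:ℤ) - μ)).symm
  rw [hB]
  have h1 := Finset.card_filter_add_card_filter_not
    (s := (range N).filter (fun i : ℕ => ((i:ℤ) - μ) % (p:ℤ) = 0))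
    (p := fun i : ℕ => μ < i)
  rw [Finset.filter_filter, Finset.filter_filter] at h1
  have h2 := Finset.card_filter_add_card_filter_not
    (s := (range N).filter (fun i : ℕ => ((i:ℤ) - μ) % (p:ℤ) = 0 ∧ μ < i))
    (p := fun i : ℕ => -(i:ℤ)-1 ∈ MM.maya f)
  rw [Finset.filter_filter, Finset.filter_filter] at h2
  have hsingle : (range N).filter
        (fun i : ℕ => (((i:ℤ) - μ) % (p:ℤ) = 0 ∧ μ < i) ∧ -(i:ℤ)-1 ∈ MM.maya f)
      = sWb' p f N μ := by
    unfold sWb'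
    apply Finset.filter_congr
    intro x _
    tauto
  have hs2 : (range N).filter
        (fun i : ℕ => (((i:ℤ) - μ) % (p:ℤ) = 0 ∧ μ < i) ∧ ¬(-(i:ℤ)-1 ∈ MM.maya f))
      = s2 p f N μ := by
    unfold s2
    apply Finset.filter_congr
    intro x _
    tauto
  have hone : (range N).filter (fun i : ℕ => ((i:ℤ) - μ) % (p:ℤ) = 0 ∧ ¬(μ < i)) = {μ} := by
    ext i
    simp only [Finset.mem_filter, Finset.mem_range, Finset.mem_singleton, not_lt]
    constructor
    · rintro ⟨hiN, hmod, hile⟩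
      by_contra hne
      have d : (p:ℤ) ∣ (μ:ℤ) - i := by
        have := (Int.dvd_of_emod_eq_zero hmod).neg_right
        rwa [neg_sub] at this
      have hlt : (0:ℤ) < (μ:ℤ) - i := by omega
      have := Int.le_of_dvd hlt d
      omega
    · rintro rfl
      exact ⟨by omega, by simp, le_refl _⟩
  rw [hsingle, hs2] at h2
  rw [hone, Finset.card_singleton] at h1
  omega

lemma Wb_eq_Wb' (hf : Antitone f) (hN : ∀ i, N ≤ i → f i = 0) :
    (sWb p f N μ).card = (sWb' p f N μ).card := by
  apply Finset.card_bij (fun i _ => (-(b f i) - 1).toNat)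
  · intro i hi
    simp only [sWb, Finset.mem_filter, Finset.mem_range, not_le] at hi
    obtain ⟨hiN, hmod, hlt⟩ := hi
    have hbl : -(i:ℤ) - 1 ≤ b f i := neg_le_b f i
    have htn : ((-(b f i) - 1).toNat : ℤ) = -(b f i) - 1 := Int.toNat_of_nonneg (by omega)
    simp only [sWb', Finset.mem_filter, Finset.mem_range]
    refine ⟨by omega, ?_, by omega, ?_⟩
    · have e : ((((-(b f i) - 1).toNat : ℕ)) : ℤ) - μ = -(b f i + μ + 1) := by omega
      rw [e]
      exact neg_mod_zero.1 hmod
    · have e : -((((-(b f i) - 1).toNat : ℕ)) : ℤ) - 1 = b f i := by omega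
      rw [e]
      exact mem_maya.2 ⟨i, rfl⟩
  · intro i hi j hj hij
    simp only [sWb, Finset.mem_filter, Finset.mem_range, not_le] at hi hj
    apply b_inj hf
    have hi2 : ((-(b f i) - 1).toNat : ℤ) = -(b f i) - 1 := Int.toNat_of_nonneg (by omega)
    have hj2 : ((-(b f j) - 1).toNat : ℤ) = -(b f j) - 1 := Int.toNat_of_nonneg (by omega)
    omega
  · intro j hj
    simp only [sWb', Finset.mem_filter, Finset.mem_range] at hj
    obtain ⟨hjN, hmod, hμj, hmem⟩ := hj
    obtain ⟨i, hib⟩ := mem_maya.1 hmem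
    have hiN : i < N := by
      by_contra hc
      have := b_eq hN (show N ≤ i by omega)
      omega
    refine ⟨i, ?_, ?_⟩
    · simp only [sWb, Finset.mem_filter, Finset.mem_range, not_le]
      refine ⟨hiN, ?_, by omega⟩
      have e : b f i + (μ:ℤ) + 1 = -((j:ℤ) - μ) := by omega
      rw [e]
      exact neg_mod_zero.1 hmod
    · omega

lemma charge_col_eq (hf : Antitone f) (hN : ∀ i, N ≤ i → f i = 0)
    (hp : 0 < p) (hμ : μ < p) (hpN : p ≤ N) :
    MM.charge (MM.col (MM.maya f) p μ)
      = (A p f N (-(μ:ℤ)-1) : ℤ) - B p N (-(μ:ℤ)-1) + 1 := by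
  unfold MM.charge
  rw [ncard_pos_beads hf hN hp hμ hpN, ncard_neg_holes hf hN hp hμ hpN]
  rw [A_split, B_split (f := f) hp hμ hpN, Wb_eq_Wb' hf hN]
  push_cast
  ring

end Splits


section Core

variable {p N : ℕ} {f : ℕ → ℕ}

lemma charge_col_eq' (hf : Antitone f) (hN : ∀ i, N ≤ i → f i = 0)
    (hp : 0 < p) {μ : ℕ} (hμ : μ < p) (hpN : p ≤ N) :
    MM.charge (MM.col (MM.maya f) p μ)
      = ((NN p f N (-(μ:ℤ)-1) : ℤ) - NN p f N (-(μ:ℤ))) + 1 := by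
  rw [charge_col_eq hf hN hp hμ hpN, ← NN_sub p hf N (-(μ:ℤ)-1)]
  rw [show -(μ:ℤ)-1+1 = -(μ:ℤ) by ring]

lemma sum_charges (hf : Antitone f) (hN : ∀ i, N ≤ i → f i = 0)
    (hp : 0 < p) (hpN : p ≤ N) :
    ∑ μ ∈ range p, MM.charge (MM.col (MM.maya f) p μ) = p := by
  have key : ∀ μ ∈ range p, MM.charge (MM.col (MM.maya f) p μ)
      = (((NN p f N (-((μ+1:ℕ):ℤ)) : ℤ) - NN p f N (-(μ:ℤ))) + 1) := by
    intro μ hμ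
    rw [Finset.mem_range] at hμ
    rw [charge_col_eq' hf hN hp hμ hpN]
    rw [show (-((μ+1:ℕ):ℤ)) = -(μ:ℤ)-1 by push_cast; ring]
  rw [Finset.sum_congr rfl key, Finset.sum_add_distrib]
  have tele : ∑ μ ∈ range p,
      ((NN p f N (-((μ+1:ℕ):ℤ)) : ℤ) - NN p f N (-(μ:ℤ))) = 0 := by
    rw [Finset.sum_range_sub (fun n : ℕ => (NN p f N (-(n:ℤ)) : ℤ)) p]
    have h0 : NN p f N (-((0:ℕ):ℤ)) = NN p f N 0 := by norm_num
    have hp' : NN p f N (-((p:ℕ):ℤ)) = NN p f N 0 := by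
      apply NN_congr
      rw [show (-(p:ℤ) - 0) = (p:ℤ) * (-1) by ring]
      exact Int.mul_emod_right _ _
    rw [h0, hp']
    ring
  rw [tele]
  simp

lemma charges_eq_one (hf : Antitone f) (hN : ∀ i, N ≤ i → f i = 0)
    (hp : 0 < p) (hpN : p ≤ N) (hcore : ∀ i, MM.pcore f p i = 0) :
    ∀ μ, μ < p → MM.charge (MM.col (MM.maya f) p μ) = 1 := by
  set c : ℕ → ℤ := fun μ => MM.charge (MM.col (MM.maya f) p μ) with hc
  have hcdef : ∀ μ, MM.charge (MM.col (MM.maya f) p μ) = c μ := fun _ => rfl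
  have hsum : ∑ μ ∈ range p, c μ = p := sum_charges hf hN hp hpN
  have hcast : ((p - 1 : ℕ) : ℤ) = (p:ℤ) - 1 := by
    have : 1 ≤ p := hp
    push_cast [this]
    ring
  -- first: every charge is at least 1
  have hge : ∀ ν, ν < p → 1 ≤ c ν := by
    intro ν hν
    by_contra hlt
    push_neg at hlt
    have hcν : c ν ≤ 0 := by omega
    -- there is a column with charge at least 2
    have hex : ∃ μ₁, μ₁ < p ∧ 2 ≤ c μ₁ := by
      by_contra hno
      push_neg at hno
      have hb : ∀ μ ∈ (range p).erase ν, c μ ≤ 1 := by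
        intro μ hμ
        have := hno μ (Finset.mem_range.1 (Finset.mem_of_mem_erase hμ))
        omega
      have h1 : ∑ μ ∈ (range p).erase ν, c μ ≤ ((range p).erase ν).card • (1:ℤ) :=
        Finset.sum_le_card_nsmul _ _ _ hb
      have h2 : c ν + ∑ μ ∈ (range p).erase ν, c μ = ∑ μ ∈ range p, c μ :=
        Finset.add_sum_erase _ _ (Finset.mem_range.2 hν)
      have h3 : ((range p).erase ν).card = p - 1 := by
        rw [Finset.card_erase_of_mem (Finset.mem_range.2 hν), Finset.card_range]
      rw [hsum] at h2
      rw [h3] at h1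
      simp only [nsmul_eq_mul, mul_one] at h1
      omega
    obtain ⟨μ₁, hμ₁, hcμ₁⟩ := hex
    set C : Set ℤ := MM.coreMaya f p with hC
    -- upper bound for C
    have hpne : (range p).Nonempty := ⟨0, Finset.mem_range.2 hp⟩
    set M : ℤ := (range p).sup' hpne c with hM
    have hub : ∀ z ∈ C, z ≤ p * M := by
      rintro z ⟨μ, hμ, k, hk, rfl⟩
      rw [hcdef] at hk
      have hcM : c μ ≤ M := Finset.le_sup' c (Finset.mem_range.2 hμ)
      have hkM : k ≤ M - 1 := by omega
      have h5 : (p:ℤ) * k ≤ p * (M - 1) :=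
        mul_le_mul_of_nonneg_left hkM (by positivity)
      have hpz : (1:ℤ) ≤ p := by exact_mod_cast hp
      nlinarith
    -- a maximum element of C
    have hCne : ∃ z, z ∈ C := by
      refine ⟨(p:ℤ) * (c 0 - 1) - 0 - 1, 0, hp, c 0 - 1, by rw [hcdef]; omega, ?_⟩
      push_cast
      ring
    obtain ⟨zmax, hzmem, hzle⟩ := Int.exists_greatest_of_bdd ⟨p * M, fun z hz => hub z hz⟩ hCne
    -- lower bound: everything below L is in C
    set m : ℤ := (range p).inf' hpne c with hm
    set L : ℤ := p * m - p with hL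
    have hlow : ∀ z : ℤ, z < L → z ∈ C := by
      intro z hz
      set μ : ℕ := ((-z-1) % (p:ℤ)).toNat with hμdef
      have hp0 : (0:ℤ) < p := by exact_mod_cast hp
      have hμ1 : ((μ:ℕ):ℤ) = (-z-1) % (p:ℤ) := Int.toNat_of_nonneg (Int.emod_nonneg _ (by omega))
      have hμp : μ < p := by
        have := Int.emod_lt_of_pos (-z-1) hp0
        omega
      have hdvd : (p:ℤ) ∣ z + μ + 1 := by
        have he := Int.emod_def (-z-1) (p:ℤ)
        rw [hμ1, he]
        exact ⟨-((-z-1) / p), by ring⟩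
      obtain ⟨k, hk⟩ := hdvd
      have hcm : m ≤ c μ := Finset.inf'_le c (Finset.mem_range.2 hμp)
      have hkc : k < c μ := by
        have h2 : (p:ℤ) * k < p * m := by
          have : ((μ:ℕ):ℤ) + 1 ≤ p := by exact_mod_cast hμp
          omega
        exact lt_of_mul_lt_mul_left
          (h2.trans_le (mul_le_mul_of_nonneg_left hcm (by positivity)))
          (by positivity : (0:ℤ) ≤ p)
      rw [← hcdef] at hkc
      exact ⟨μ, hμp, k, hkc, by omega⟩
    -- bead C 0 is zmax
    have hbead : MM.bead C 0 = zmax := by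
      have hTset : {z | z ∈ C ∧ {w | w ∈ C ∧ z < w}.ncard = (0:ℕ)} = {zmax} := by
        ext z
        simp only [Set.mem_setOf_eq, Set.mem_singleton_iff]
        constructor
        · rintro ⟨hzC, hz0⟩
          by_contra hne
          have hzlt : z < zmax := lt_of_le_of_ne (hzle z hzC) hne
          have hWfin : {w | w ∈ C ∧ z < w}.Finite := by
            apply Set.Finite.subset (Set.finite_Icc (z+1) zmax)
            rintro w ⟨hwC, hzw⟩
            exact Set.mem_Icc.2 ⟨by omega, hzle w hwC⟩
          have hemp := (Set.ncard_eq_zero hWfin).1 hz0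
          have hmm : zmax ∈ {w | w ∈ C ∧ z < w} := ⟨hzmem, hzlt⟩
          rw [hemp] at hmm
          exact hmm
        · intro hzz
          rw [hzz]
          refine ⟨hzmem, ?_⟩
          have hemp : {w | w ∈ C ∧ zmax < w} = ∅ := by
            ext w
            simp only [Set.mem_setOf_eq, Set.mem_empty_iff_false, iff_false, not_and, not_lt]
            exact fun hw => hzle w hw
          rw [hemp]
          exact Set.ncard_empty ℤ
      rw [MM.bead, hTset]
      exact csSup_singleton zmax
    -- the hole -ν-1 is not in C
    have hz2 : (-(ν:ℤ)-1) ∉ C := by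
      rintro ⟨μ, hμ, k, hk, he⟩
      rw [hcdef] at hk
      have hpk : (p:ℤ) * k = (μ:ℤ) - ν := by omega
      have hμb : ((μ:ℕ):ℤ) < p := by exact_mod_cast hμ
      have hνb : ((ν:ℕ):ℤ) < p := by exact_mod_cast hν
      have hk0 : k = 0 := by
        rcases lt_trichotomy k 0 with h | h | h
        · have h6 : (p:ℤ) * k ≤ p * (-1) := mul_le_mul_of_nonneg_left (by omega) (by positivity)
          have h7 : (p:ℤ) * (-1) = -p := by ring
          omega
        · exact h
        · have h6 : (p:ℤ) * 1 ≤ p * k := mul_le_mul_of_nonneg_left (by omega) (by positivity)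
          have h7 : (p:ℤ) * 1 = p := by ring
          omega
      have hμν : μ = ν := by
        rw [hk0, mul_zero] at hpk
        omega
      rw [hμν] at hk
      omega
    -- z₁ = p*(c μ₁ - 1) - μ₁ - 1 is a nonnegative element of C
    have hz1mem : (p:ℤ) * (c μ₁ - 1) - μ₁ - 1 ∈ C :=
      ⟨μ₁, hμ₁, c μ₁ - 1, by rw [hcdef]; omega, rfl⟩
    have hz1ge : (0:ℤ) ≤ (p:ℤ) * (c μ₁ - 1) - μ₁ - 1 := by
      have h6 : (p:ℤ) * 1 ≤ p * (c μ₁ - 1) := mul_le_mul_of_nonneg_left (by omega) (by positivity)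
      have h7 : (p:ℤ) * 1 = p := by ring
      have h8 : ((μ₁:ℕ):ℤ) < p := by exact_mod_cast hμ₁
      omega
    have hzmax0 : (0:ℤ) ≤ zmax := le_trans hz1ge (hzle _ hz1mem)
    -- pcore at 0 gives a contradiction
    have hpc : {t : ℤ | t ∉ C ∧ t < MM.bead C 0}.ncard = 0 := by
      have := hcore 0
      simpa [MM.pcore, MM.partOf, hC] using this
    have hU : {t : ℤ | t ∉ C ∧ t < MM.bead C 0}.Finite := by
      apply Set.Finite.subset (Set.finite_Icc L zmax)
      rintro t ⟨htC, htlt⟩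
      rw [hbead] at htlt
      refine Set.mem_Icc.2 ⟨?_, by omega⟩
      by_contra h
      exact htC (hlow t (by omega))
    have hemp := (Set.ncard_eq_zero hU).1 hpc
    have hmem2 : (-(ν:ℤ)-1) ∈ {t : ℤ | t ∉ C ∧ t < MM.bead C 0} := by
      refine ⟨hz2, ?_⟩
      rw [hbead]
      omega
    rw [hemp] at hmem2
    exact hmem2
  -- now conclude each charge is exactly 1
  intro μ₀ hμ₀
  rw [hcdef]
  have h2 : c μ₀ + ∑ μ ∈ (range p).erase μ₀, c μ = ∑ μ ∈ range p, c μ :=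
    Finset.add_sum_erase _ _ (Finset.mem_range.2 hμ₀)
  have hball : ∀ μ ∈ (range p).erase μ₀, 1 ≤ c μ := fun μ hμ =>
    hge μ (Finset.mem_range.1 (Finset.mem_of_mem_erase hμ))
  have h1 : ((range p).erase μ₀).card • (1:ℤ) ≤ ∑ μ ∈ (range p).erase μ₀, c μ :=
    Finset.card_nsmul_le_sum _ _ _ hball
  have h3 : ((range p).erase μ₀).card = p - 1 := by
    rw [Finset.card_erase_of_mem (Finset.mem_range.2 hμ₀), Finset.card_range]
  rw [hsum] at h2
  rw [h3] at h1
  simp only [nsmul_eq_mul, mul_one] at h1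
  have := hge μ₀ hμ₀
  omega

end Core


section Final

variable {p N : ℕ} {f : ℕ → ℕ}

lemma ncard_set_eq (hanti : Antitone f) (hN : ∀ i, N ≤ i → f i = 0) (r : ℤ) :
    {c : ℕ × ℕ | c ∈ MM.cells f ∧ MM.content c % (p:ℤ) = r % (p:ℤ)}.ncard = NN p f N r := by
  have hcells := cells_eq hanti hN
  have hset : {c : ℕ × ℕ | c ∈ MM.cells f ∧ MM.content c % (p:ℤ) = r % (p:ℤ)}
      = ↑((F f N).filter (fun c => (MM.content c - r) % (p:ℤ) = 0)) := by
    ext cc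
    simp only [Set.mem_setOf_eq, Finset.coe_filter]
    rw [Int.emod_eq_emod_iff_emod_sub_eq_zero, hcells]
    simp only [Finset.mem_coe]
  rw [hset, Set.ncard_coe_finset]
  rfl

lemma sum_NN (hp : 0 < p) : ∑ r ∈ range p, NN p f N ((r:ℕ):ℤ) = (F f N).card := by
  have hp0 : (0:ℤ) < p := by exact_mod_cast hp
  rw [Finset.card_eq_sum_card_fiberwise
    (f := fun c : ℕ × ℕ => (MM.content c % (p:ℤ)).toNat) (t := range p) ?hmem]
  · apply Finset.sum_congr rfl
    intro r hr
    rw [Finset.mem_range] at hr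
    unfold NN
    congr 1
    apply Finset.filter_congr
    intro cc _
    have h0 : 0 ≤ MM.content cc % (p:ℤ) := Int.emod_nonneg _ (by omega)
    have hlt : MM.content cc % (p:ℤ) < p := Int.emod_lt_of_pos _ hp0
    have hr' : ((r:ℕ):ℤ) % (p:ℤ) = (r:ℕ) := Int.emod_eq_of_lt (by positivity) (by exact_mod_cast hr)
    constructor
    · intro h
      have h2 := Int.emod_eq_emod_iff_emod_sub_eq_zero.2 h
      rw [hr'] at h2
      omega
    · intro h
      rw [← Int.emod_eq_emod_iff_emod_sub_eq_zero, hr']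
      omega
  case hmem =>
    intro cc _
    rw [Finset.mem_coe, Finset.mem_range]
    show (MM.content cc % (p:ℤ)).toNat < p
    have h0 : 0 ≤ MM.content cc % (p:ℤ) := Int.emod_nonneg _ (by omega)
    have hlt : MM.content cc % (p:ℤ) < p := Int.emod_lt_of_pos _ hp0
    omega

end Final


end

end MMX


/-- if λ has trivial p-core, contents are equidistributed mod p. -/
theorem content_equidistributed (p : ℕ) (hp : 0 < p) (f : ℕ → ℕ) (hf : MM.IsPartition f)
    (hcore : ∀ i, MM.pcore f p i = 0) :
    ∀ i : ℤ, p * {c | c ∈ MM.cells f ∧ MM.content c % p = i % p}.ncard = MM.size f := by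
  intro i
  obtain ⟨hanti, N0, hN0⟩ := hf
  set N : ℕ := N0 + p with hNdef
  have hN : ∀ j, N ≤ j → f j = 0 := fun j hj => hN0 j (by omega)
  have hpN : p ≤ N := by omega
  have hp0 : (0:ℤ) < p := by exact_mod_cast hp
  have hones := MMX.charges_eq_one hanti hN hp hpN hcore
  -- the counts are translation invariant
  have step : ∀ r : ℤ, MMX.NN p f N r = MMX.NN p f N (r+1) := by
    intro r
    set μ : ℕ := ((-r-1) % (p:ℤ)).toNat with hμdef
    have hμ1 : ((μ:ℕ):ℤ) = (-r-1) % (p:ℤ) := Int.toNat_of_nonneg (Int.emod_nonneg _ (by omega))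
    have hμp : μ < p := by
      have := Int.emod_lt_of_pos (-r-1) hp0
      omega
    have hcong : (r - (-(μ:ℤ)-1)) % (p:ℤ) = 0 := by
      apply Int.emod_eq_zero_of_dvd
      refine ⟨-((-r-1) / p), ?_⟩
      have he := Int.emod_def (-r-1) (p:ℤ)
      rw [hμ1, he]
      ring
    have hAB := MMX.NN_sub p hanti N r
    have hA := MMX.A_congr p f N hcong
    have hB := MMX.B_congr p N hcong
    have hcc := MMX.charge_col_eq hanti hN hp hμp hpN
    rw [hones μ hμp] at hcc
    omega
  have hconst : ∀ n : ℕ, MMX.NN p f N ((n:ℕ):ℤ) = MMX.NN p f N 0 := by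
    intro n
    induction n with
    | zero => norm_num
    | succ k ih =>
      have hs := step ((k:ℕ):ℤ)
      rw [show (((k+1:ℕ)):ℤ) = ((k:ℕ):ℤ)+1 by push_cast; ring, ← hs, ih]
  have hi0 : MMX.NN p f N i = MMX.NN p f N 0 := by
    have h1 : MMX.NN p f N i = MMX.NN p f N (((i % (p:ℤ)).toNat : ℕ) : ℤ) := by
      apply MMX.NN_congr
      apply Int.emod_eq_zero_of_dvd
      have h2 : (((i % (p:ℤ)).toNat : ℕ) : ℤ) = i % (p:ℤ) :=
        Int.toNat_of_nonneg (Int.emod_nonneg _ (by omega))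
      refine ⟨i / p, ?_⟩
      have he := Int.emod_def i (p:ℤ)
      rw [h2, he]
      ring
    rw [h1, hconst]
  have hsize : MM.size f = (MMX.F f N).card := by
    rw [MM.size, MMX.cells_eq hanti hN, Set.ncard_coe_finset]
  rw [MMX.ncard_set_eq hanti hN i, hi0, hsize, ← MMX.sum_NN hp]
  rw [Finset.sum_congr rfl (fun r _ => hconst r)]
  rw [Finset.sum_const, Finset.card_range, smul_eq_mul]
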